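/- Let v^1, ..., v^n be vectors in ℝ^d and let 1 ≤ m < n. Suppose v^j[0] > 0 for all j ≤ m and v^i[0] = 0 for all i > m. Then for every i > m, the vector v^i is a nonnegative combination of {v^j : j ≠ i} if and only if v^i is a nonnegative combination of the smaller family {v^j : j > m, j ≠ i}. -/
import Mathlib


/-- Generalization of Proposition 4.1 (Remark 4.2): if the first `m` vectors
(indices `j` with `j.val < m`, i.e. the paper's `v^1, …, v^m`) have positive
first coordinate and the remaining ones (indices with `m ≤ i.val`, i.e.
`v^{m+1}, …, v^n`) have first coordinate zero, then for every `i` in the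
latter group, `v i` is a nonnegative combination of all the other vectors if
and only if it is a nonnegative combination of the other vectors of the
latter group. -/
theorem statement_3 (n d m : ℕ) (hd : 0 < d) (hm1 : 1 ≤ m) (hmn : m < n)
    (v : Fin n → Fin d → ℝ)
    (hpos : ∀ j : Fin n, (j : ℕ) < m → 0 < v j ⟨0, hd⟩)
    (hzero : ∀ i : Fin n, m ≤ (i : ℕ) → v i ⟨0, hd⟩ = 0) :
    ∀ i : Fin n, m ≤ (i : ℕ) →
      ((∃ x : Fin n → ℝ, (∀ j, 0 ≤ x j) ∧
          v i = ∑ j ∈ Finset.univ.erase i, x j • v j) ↔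
        (∃ x : Fin n → ℝ, (∀ j, 0 ≤ x j) ∧
          v i = ∑ j ∈ Finset.univ.filter (fun j : Fin n => m ≤ (j : ℕ) ∧ j ≠ i),
            x j • v j)) := by
  intro i hi
  have hsub : (Finset.univ.filter (fun j : Fin n => m ≤ (j : ℕ) ∧ j ≠ i)) ⊆
      Finset.univ.erase i := by
    intro j hj
    simp only [Finset.mem_filter] at hj
    exact Finset.mem_erase.2 ⟨hj.2.2, Finset.mem_univ j⟩
  constructor
  · rintro ⟨x, hx, hsum⟩
    -- evaluate at coordinate 0
    have h0 : (0 : ℝ) = ∑ j ∈ Finset.univ.erase i, x j * v j ⟨0, hd⟩ := by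
      have := congrFun hsum ⟨0, hd⟩
      rw [hzero i hi] at this
      simpa using this
    have h0' := h0.symm
    have hterm0 : ∀ j ∈ Finset.univ.erase i, x j * v j ⟨0, hd⟩ = 0 := by
      rw [Finset.sum_eq_zero_iff_of_nonneg] at h0'
      · exact fun j hj => h0' j hj
      · intro j hj
        rcases lt_or_ge (j : ℕ) m with h | h
        · exact mul_nonneg (hx j) (hpos j h).le
        · rw [hzero j h, mul_zero]
    have hxzero : ∀ j ∈ Finset.univ.erase i, (j : ℕ) < m → x j = 0 := by
      intro j hj hjm
      have := hterm0 j hj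
      have hp := hpos j hjm
      exact (mul_eq_zero.1 this).resolve_right (ne_of_gt hp)
    refine ⟨x, hx, ?_⟩
    rw [hsum]
    refine (Finset.sum_subset hsub ?_).symm
    intro j hj hjnot
    have hji : j ≠ i := (Finset.mem_erase.1 hj).1
    have : ¬ (m ≤ (j : ℕ)) := by
      intro hle
      exact hjnot (Finset.mem_filter.2 ⟨Finset.mem_univ j, hle, hji⟩)
    rw [hxzero j hj (lt_of_not_ge this), zero_smul]
  · rintro ⟨x, hx, hsum⟩
    refine ⟨fun j => if m ≤ (j : ℕ) ∧ j ≠ i then x j else 0, fun j => ?_, ?_⟩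
    · dsimp only
      split
      · exact hx j
      · exact le_refl 0
    · rw [hsum]
      have h1 : ∑ j ∈ Finset.univ.filter (fun j : Fin n => m ≤ (j : ℕ) ∧ j ≠ i),
          x j • v j = ∑ j ∈ Finset.univ.filter (fun j : Fin n => m ≤ (j : ℕ) ∧ j ≠ i),
          (if m ≤ (j : ℕ) ∧ j ≠ i then x j else 0) • v j := by
        refine Finset.sum_congr rfl ?_
        intro j hj
        simp only [Finset.mem_filter] at hj
        rw [if_pos hj.2]
      rw [h1]
      refine Finset.sum_subset hsub ?_
      intro j _ hjnot
      rw [if_neg, zero_smul]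
      intro hc
      exact hjnot (Finset.mem_filter.2 ⟨Finset.mem_univ j, hc⟩)
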